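/- Let J : ℝ → ℝ be a convex, twice continuously differentiable function with J(0) = 0, and define the Legendre–Fenchel transform I(x) = sup_{s ∈ ℝ} (s·x − J(s)). Set x₀ = J'(0) and suppose J''(0) > 0. Then there is an open interval around x₀ on which I is twice differentiable, I(x₀) = 0, I'(x₀) = 0, and I''(x₀) = 1 / J''(0); consequently I(x) = (x − x₀)² / (2·J''(0)) + o((x − x₀)²) as x → x₀. -/

import Mathlib

open Set Filter Topology

/-- Quadratic behavior of the Legendre–Fenchel transform of a convex C²
generating function `J` near `x₀ = J'(0)`, with `I''(x₀) = 1 / J''(0)`. -/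
theorem stmt_0
    (J : ℝ → ℝ) (hconv : ConvexOn ℝ Set.univ J) (hJC2 : ContDiff ℝ 2 J)
    (hJ0 : J 0 = 0)
    (I : ℝ → ℝ) (hI : ∀ x : ℝ, I x = ⨆ s : ℝ, (s * x - J s))
    (x₀ : ℝ) (hx₀ : x₀ = deriv J 0)
    (hpos : 0 < deriv (deriv J) 0) :
    ∃ U : Set ℝ, IsOpen U ∧ x₀ ∈ U ∧
      (∀ x ∈ U, DifferentiableAt ℝ I x ∧ DifferentiableAt ℝ (deriv I) x) ∧
      I x₀ = 0 ∧ deriv I x₀ = 0 ∧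
      deriv (deriv I) x₀ = 1 / deriv (deriv J) 0 ∧
      Filter.Tendsto
        (fun x : ℝ => (I x - (x - x₀) ^ 2 / (2 * deriv (deriv J) 0)) / (x - x₀) ^ 2)
        (nhdsWithin x₀ {x₀}ᶜ) (nhds 0) := by
  set f : ℝ → ℝ := deriv J with hf_def
  set g : ℝ → ℝ := deriv f with hg_def
  -- regularity
  have h2 : ContDiff ℝ ((1 : WithTop ℕ∞) + 1) J := by
    rw [show ((1 : WithTop ℕ∞) + 1) = 2 from by norm_num]
    exact hJC2
  rw [contDiff_succ_iff_deriv] at h2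
  have hJdiff : Differentiable ℝ J := h2.1
  have hf1 : ContDiff ℝ 1 f := h2.2.2
  have hf1' := hf1
  rw [contDiff_one_iff_deriv] at hf1'
  have hfdiff : Differentiable ℝ f := hf1'.1
  have hgc : Continuous g := hf1'.2
  -- support line inequality
  have hsupp : ∀ t s : ℝ, J t + f t * (s - t) ≤ J s := by
    intro t s
    rcases lt_trichotomy s t with h | h | h
    · have h1 := hconv.slope_le_deriv (mem_univ s) (mem_univ t) h (hJdiff t)
      rw [slope_def_field] at h1
      have ht : (0:ℝ) < t - s := by linarith
      rw [div_le_iff₀ ht] at h1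
      nlinarith
    · simp [h]
    · have h1 := hconv.deriv_le_slope (mem_univ t) (mem_univ s) h (hJdiff t)
      rw [slope_def_field] at h1
      have ht : (0:ℝ) < s - t := by linarith
      rw [le_div_iff₀ ht] at h1
      nlinarith
  -- optimizer bound
  have hbound : ∀ x t s : ℝ, f t = x → s * x - J s ≤ t * x - J t := by
    intro x t s hft
    have h := hsupp t s
    rw [hft] at h
    nlinarith
  -- positivity neighborhood
  obtain ⟨ε, hεpos, hball⟩ :=
    Metric.mem_nhds_iff.1 (hgc.continuousAt.preimage_mem_nhds (Ioi_mem_nhds hpos))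
  set δ : ℝ := ε / 2 with hδdef
  have hδ : 0 < δ := by positivity
  have hgpos : ∀ s ∈ Icc (-δ) δ, 0 < g s := by
    intro s hs
    have habs : |s| ≤ δ := abs_le.2 ⟨hs.1, hs.2⟩
    have hmem : s ∈ Metric.ball (0 : ℝ) ε := by
      simp only [Metric.mem_ball, Real.dist_eq, sub_zero]
      linarith [habs]
    exact hball hmem
  -- strict monotonicity of f on Icc
  have hmono : StrictMonoOn f (Icc (-δ) δ) := by
    apply strictMonoOn_of_deriv_pos (convex_Icc _ _) hfdiff.continuous.continuousOn
    intro s hs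
    rw [interior_Icc] at hs
    exact hgpos s (Ioo_subset_Icc_self hs)
  have hinj := hmono.injOn
  set U : Set ℝ := Ioo (f (-δ)) (f δ) with hU_def
  have hUopen : IsOpen U := isOpen_Ioo
  have hx₀U : x₀ ∈ U := by
    constructor
    · rw [hx₀]
      exact hmono ⟨le_refl _, by linarith⟩ ⟨by linarith, by linarith⟩ (by linarith)
    · rw [hx₀]
      exact hmono ⟨by linarith, by linarith⟩ ⟨by linarith, le_refl _⟩ (by linarith)
  -- inverse function σ
  have hexU : ∀ x ∈ U, ∃ t, t ∈ Ioo (-δ) δ ∧ f t = x := by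
    intro x hx
    obtain ⟨t, ht, hft⟩ :=
      intermediate_value_Ioo (by linarith : -δ ≤ δ) hfdiff.continuous.continuousOn hx
    exact ⟨t, ht, hft⟩
  choose! σ hσmem hσfx using hexU
  have hσx₀ : σ x₀ = 0 := by
    apply hinj (Ioo_subset_Icc_self (hσmem x₀ hx₀U)) ⟨by linarith, by linarith⟩
    rw [hσfx x₀ hx₀U, hx₀]
  -- continuity of σ
  have hσcont : ∀ x ∈ U, ContinuousAt σ x := by
    intro x hxU
    have htI := hσmem x hxU
    have hfeq := hσfx x hxU
    rw [Metric.continuousAt_iff]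
    intro ε₀ hε₀
    set t := σ x with ht_def
    set ε' : ℝ := min ε₀ (min (δ - t) (t + δ)) / 2 with hε'def
    have h1 : -δ < t := htI.1
    have h2 : t < δ := htI.2
    have hm1 : min ε₀ (min (δ - t) (t + δ)) ≤ ε₀ := min_le_left _ _
    have hm2 : min ε₀ (min (δ - t) (t + δ)) ≤ δ - t := (min_le_right _ _).trans (min_le_left _ _)
    have hm3 : min ε₀ (min (δ - t) (t + δ)) ≤ t + δ := (min_le_right _ _).trans (min_le_right _ _)
    have hε'pos : 0 < ε' := by
      apply div_pos _ (by norm_num)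
      exact lt_min hε₀ (lt_min (by linarith) (by linarith))
    have hε'le : ε' ≤ ε₀ / 2 := by
      rw [hε'def]
      linarith
    have hε'le2 : ε' ≤ (δ - t) / 2 := by
      rw [hε'def]; linarith
    have hε'le3 : ε' ≤ (t + δ) / 2 := by
      rw [hε'def]; linarith
    have hmemL : t - ε' ∈ Icc (-δ) δ := ⟨by linarith, by linarith⟩
    have hmemR : t + ε' ∈ Icc (-δ) δ := ⟨by linarith, by linarith⟩
    have htIcc : t ∈ Icc (-δ) δ := ⟨by linarith, by linarith⟩
    have hlt1 : f (t - ε') < x := by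
      rw [← hfeq]; exact hmono hmemL htIcc (by linarith)
    have hlt2 : x < f (t + ε') := by
      rw [← hfeq]; exact hmono htIcc hmemR (by linarith)
    refine ⟨min (x - f (t - ε')) (f (t + ε') - x), lt_min (by linarith) (by linarith), ?_⟩
    intro y hy
    rw [Real.dist_eq] at hy
    have habs := abs_lt.1 hy
    have hmin1 := min_le_left (x - f (t - ε')) (f (t + ε') - x)
    have hmin2 := min_le_right (x - f (t - ε')) (f (t + ε') - x)
    have hy1 : f (t - ε') < y := by linarith [habs.1]
    have hy2 : y < f (t + ε') := by linarith [habs.2]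
    have hyU : y ∈ U := by
      constructor
      · exact lt_of_le_of_lt
          (hmono.monotoneOn ⟨le_refl _, by linarith⟩ hmemL (by linarith)) hy1
      · exact lt_of_lt_of_le hy2
          (hmono.monotoneOn hmemR ⟨by linarith, le_refl _⟩ (by linarith))
    have hmy := hσmem y hyU
    have hfy := hσfx y hyU
    have hb1 : t - ε' < σ y := by
      by_contra hcon
      push_neg at hcon
      have hle : f (σ y) ≤ f (t - ε') :=
        hmono.monotoneOn (Ioo_subset_Icc_self hmy) hmemL hcon
      rw [hfy] at hle; linarith
    have hb2 : σ y < t + ε' := by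
      by_contra hcon
      push_neg at hcon
      have hle : f (t + ε') ≤ f (σ y) :=
        hmono.monotoneOn hmemR (Ioo_subset_Icc_self hmy) hcon
      rw [hfy] at hle; linarith
    rw [Real.dist_eq, abs_lt]
    exact ⟨by linarith, by linarith⟩
  -- strict derivative of σ
  have hσderiv : ∀ x ∈ U, HasStrictDerivAt σ (g (σ x))⁻¹ x := by
    intro x hxU
    have hfstrict : HasStrictDerivAt f (g (σ x)) (σ x) :=
      hf1.contDiffAt.hasStrictDerivAt (by norm_num)
    refine HasStrictDerivAt.of_local_left_inverse (hσcont x hxU) hfstrict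
      (ne_of_gt (hgpos _ (Ioo_subset_Icc_self (hσmem x hxU)))) ?_
    exact Filter.eventually_of_mem (hUopen.mem_nhds hxU) (fun y hy => hσfx y hy)
  -- formula for I on U
  have hIeq : ∀ x ∈ U, I x = σ x * x - J (σ x) := by
    intro x hxU
    have hub : ∀ s, s * x - J s ≤ σ x * x - J (σ x) := fun s =>
      hbound x (σ x) s (hσfx x hxU)
    rw [hI x]
    apply le_antisymm
    · exact ciSup_le hub
    · exact le_ciSup ⟨σ x * x - J (σ x), by rintro _ ⟨s, rfl⟩; exact hub s⟩ (σ x)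
  -- derivative of I
  have hIderiv : ∀ x ∈ U, HasDerivAt I (σ x) x := by
    intro x hxU
    have hσd := (hσderiv x hxU).hasDerivAt
    have h1 : HasDerivAt (fun y => σ y * y) ((g (σ x))⁻¹ * x + σ x * 1) x :=
      hσd.mul (hasDerivAt_id x)
    have h2 : HasDerivAt (fun y => J (σ y)) (f (σ x) * (g (σ x))⁻¹) x :=
      ((hJdiff (σ x)).hasDerivAt).comp x hσd
    have h3 : HasDerivAt (fun y => σ y * y - J (σ y)) (σ x) x := by
      have h4 := h1.sub h2
      exact h4.congr_deriv (by rw [hσfx x hxU]; ring)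
    exact h3.congr_of_eventuallyEq
      (Filter.eventuallyEq_of_mem (hUopen.mem_nhds hxU) (fun y hy => hIeq y hy))
  have hderivIσ : ∀ x ∈ U, deriv I =ᶠ[𝓝 x] σ := by
    intro x hxU
    exact Filter.eventuallyEq_of_mem (hUopen.mem_nhds hxU)
      (fun y hy => (hIderiv y hy).deriv)
  refine ⟨U, hUopen, hx₀U, ?_, ?_, ?_, ?_, ?_⟩
  · intro x hxU
    exact ⟨(hIderiv x hxU).differentiableAt,
      ((hderivIσ x hxU).differentiableAt_iff).2 (hσderiv x hxU).hasDerivAt.differentiableAt⟩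
  · rw [hIeq x₀ hx₀U, hσx₀, hJ0]; ring
  · rw [(hIderiv x₀ hx₀U).deriv, hσx₀]
  · rw [(hderivIσ x₀ hx₀U).deriv_eq, (hσderiv x₀ hx₀U).hasDerivAt.deriv, hσx₀, one_div]
  · -- Taylor remainder via L'Hôpital
    have hg0 : g 0 ≠ 0 := ne_of_gt (hgpos 0 ⟨by linarith, by linarith⟩)
    have hGderiv : ∀ x : ℝ, HasDerivAt (fun y : ℝ => (y - x₀) ^ 2) (2 * (x - x₀)) x := by
      intro x
      have h := ((hasDerivAt_id x).sub_const x₀).pow 2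
      exact h.congr_deriv (by simp)
    have hFderiv : ∀ x ∈ U,
        HasDerivAt (fun y => I y - (y - x₀) ^ 2 / (2 * g 0)) (σ x - (x - x₀) / g 0) x := by
      intro x hxU
      have hq : HasDerivAt (fun y : ℝ => (y - x₀) ^ 2 / (2 * g 0)) ((x - x₀) / g 0) x := by
        have h := (hGderiv x).div_const (2 * g 0)
        exact h.congr_deriv (mul_div_mul_left (x - x₀) (g 0) (two_ne_zero : (2:ℝ) ≠ 0))
      exact (hIderiv x hxU).sub hq
    have hUnhds : U ∈ 𝓝 x₀ := hUopen.mem_nhds hx₀U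
    have hslope : Tendsto (slope σ x₀) (𝓝[≠] x₀) (𝓝 ((g 0)⁻¹)) := by
      have h := hasDerivAt_iff_tendsto_slope.1 (hσderiv x₀ hx₀U).hasDerivAt
      rwa [hσx₀] at h
    apply HasDerivAt.lhopital_zero_nhdsNE
      (f' := fun x => σ x - (x - x₀) / g 0) (g' := fun x => 2 * (x - x₀))
    · exact eventually_nhdsWithin_of_eventually_nhds
        (Filter.eventually_of_mem hUnhds (fun x hx => hFderiv x hx))
    · exact eventually_nhdsWithin_of_eventually_nhds
        (Filter.Eventually.of_forall hGderiv)
    · filter_upwards [self_mem_nhdsWithin] with x hx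
      have hxne : x ≠ x₀ := hx
      intro hcon
      apply hxne
      have h2 : x - x₀ = 0 := by
        rcases mul_eq_zero.1 hcon with h | h
        · norm_num at h
        · exact h
      linarith
    · have hIc : ContinuousAt I x₀ := (hIderiv x₀ hx₀U).differentiableAt.continuousAt
      have hI0 : I x₀ = 0 := by rw [hIeq x₀ hx₀U, hσx₀, hJ0]; ring
      have h : Tendsto (fun y => I y - (y - x₀) ^ 2 / (2 * g 0)) (𝓝 x₀) (𝓝 0) := by
        have hc : ContinuousAt (fun y => I y - (y - x₀) ^ 2 / (2 * g 0)) x₀ :=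
          hIc.sub (((continuousAt_id.sub continuousAt_const).pow 2).div_const (2 * g 0))
        have h2 := hc.tendsto
        simpa [hI0] using h2
      exact h.mono_left nhdsWithin_le_nhds
    · have h : Tendsto (fun y : ℝ => (y - x₀) ^ 2) (𝓝 x₀) (𝓝 0) := by
        have hc : ContinuousAt (fun y : ℝ => (y - x₀) ^ 2) x₀ :=
          (continuousAt_id.sub continuousAt_const).pow 2
        have h2 := hc.tendsto
        simpa using h2
      exact h.mono_left nhdsWithin_le_nhds
    · have htend : Tendsto (fun x => (slope σ x₀ x - (g 0)⁻¹) / 2) (𝓝[≠] x₀) (𝓝 0) := by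
        have h := (hslope.sub (tendsto_const_nhds (x := (g 0)⁻¹))).div_const 2
        simpa using h
      apply htend.congr'
      filter_upwards [self_mem_nhdsWithin] with x hx
      have hxne : x - x₀ ≠ 0 := sub_ne_zero.2 hx
      rw [slope_def_field, hσx₀, sub_zero]
      rw [div_eq_div_iff (by norm_num : (2:ℝ) ≠ 0) (mul_ne_zero (by norm_num : (2:ℝ) ≠ 0) hxne)]
      field_simp
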